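/- Fix s ∈ ℕ, integers a₁,...,a_s ≥ 2, and polynomials P₁,...,P_s with nonnegative integer values on ℕ₀, P_i(0) = 0, each nonconstant. If Σ_{i=1}^s 1/deg(P_i) < 1, then the set A = { a₁^{P₁(n₁)} ⋯ a_s^{P_s(n_s)} : n₁,...,n_s ∈ ℕ₀ } satisfies that FS(A) has density zero; in particular A is not complete. -/

import Mathlib

open Filter

lemma poly_growth (P : Polynomial ℤ) (hd : 0 < P.natDegree)
    (hval : ∀ n : ℕ, 0 ≤ P.eval (n : ℤ)) :
    ∃ B : ℕ, 0 < B ∧ ∀ n : ℕ, B ≤ n → (n : ℤ) ^ P.natDegree ≤ 2 * P.eval (n : ℤ) := by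
  set d := P.natDegree with hdd
  set M : ℤ := ∑ j ∈ Finset.range d, |P.coeff j| with hM
  have hM0 : 0 ≤ M := Finset.sum_nonneg fun j _ => abs_nonneg _
  have key : ∀ n : ℕ, 1 ≤ n →
      |P.eval (n : ℤ) - P.coeff d * (n : ℤ) ^ d| ≤ M * (n : ℤ) ^ (d - 1) := by
    intro n hn
    have hn1 : (1 : ℤ) ≤ (n : ℤ) := by exact_mod_cast hn
    have h1 : P.eval (n : ℤ) = ∑ j ∈ Finset.range (d + 1), P.coeff j * (n : ℤ) ^ j :=
      Polynomial.eval_eq_sum_range _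
    rw [h1, Finset.sum_range_succ, add_sub_cancel_right]
    calc |∑ j ∈ Finset.range d, P.coeff j * (n : ℤ) ^ j|
        ≤ ∑ j ∈ Finset.range d, |P.coeff j * (n : ℤ) ^ j| := Finset.abs_sum_le_sum_abs _ _
      _ ≤ ∑ j ∈ Finset.range d, |P.coeff j| * (n : ℤ) ^ (d - 1) := by
          apply Finset.sum_le_sum
          intro j hj
          have hjd : j < d := Finset.mem_range.mp hj
          rw [abs_mul, abs_pow, Int.abs_natCast]
          exact mul_le_mul_of_nonneg_left
            (pow_le_pow_right₀ hn1 (by omega : j ≤ d - 1)) (abs_nonneg _)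
      _ = M * (n : ℤ) ^ (d - 1) := by rw [hM, Finset.sum_mul]
  have hPne : P ≠ 0 := by
    intro h
    rw [hdd, h, Polynomial.natDegree_zero] at hd
    exact lt_irrefl 0 hd
  have hlcne : P.coeff d ≠ 0 := by
    rw [hdd, ← Polynomial.leadingCoeff]
    exact Polynomial.leadingCoeff_ne_zero.mpr hPne
  have hlc : 1 ≤ P.coeff d := by
    by_contra h
    push_neg at h
    have hlc' : P.coeff d ≤ -1 := by omega
    set n : ℕ := M.toNat + 1 with hn
    have hn1 : 1 ≤ n := by omega
    have hnM : (n : ℤ) = M + 1 := by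
      rw [hn]; push_cast [Int.toNat_of_nonneg hM0]; ring
    have hk := (abs_le.mp (key n hn1)).2
    have hpow : ((n : ℤ)) ^ d = (n : ℤ) ^ (d - 1) * (n : ℤ) := by
      rw [← pow_succ]; congr 1; omega
    have hp1 : (1 : ℤ) ≤ (n : ℤ) ^ (d - 1) := one_le_pow₀ (by omega)
    have hnd : (0:ℤ) ≤ (n:ℤ) ^ d := by positivity
    have h2 : P.coeff d * (n:ℤ)^d ≤ -((n:ℤ)^d) := by nlinarith
    have h3 : ((n : ℤ)) ^ d = (n : ℤ) ^ (d - 1) * (M + 1) := by rw [hpow, hnM]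
    have := hval n
    nlinarith [this, hk, h2, h3, hp1]
  refine ⟨2 * M.toNat + 1, by omega, fun n hn => ?_⟩
  have hn1 : 1 ≤ n := by omega
  have hnM : (2 * M + 1 : ℤ) ≤ (n : ℤ) := by
    have : (2 * M.toNat + 1 : ℤ) ≤ (n : ℤ) := by exact_mod_cast hn
    rwa [Int.toNat_of_nonneg hM0] at this
  have hk := (abs_le.mp (key n hn1)).1
  have hpow : ((n : ℤ)) ^ d = (n : ℤ) ^ (d - 1) * (n : ℤ) := by
    rw [← pow_succ]; congr 1; omega
  have hp1 : (1 : ℤ) ≤ (n : ℤ) ^ (d - 1) := one_le_pow₀ (by omega)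
  have hnd : (0:ℤ) ≤ (n:ℤ) ^ d := by positivity
  have hx0 : (0:ℤ) ≤ (n:ℤ) ^ (d-1) := by positivity
  have h2 : (n:ℤ)^d ≤ P.coeff d * (n:ℤ)^d := le_mul_of_one_le_left hnd hlc
  have h3 : (2*M) * ((n:ℤ)^(d-1)) ≤ ((n:ℤ)-1) * ((n:ℤ)^(d-1)) :=
    mul_le_mul_of_nonneg_right (by linarith) hx0
  nlinarith [hk, h2, h3, hpow, hp1]

lemma poly_count (P : Polynomial ℤ) (hd : 0 < P.natDegree)
    (hval : ∀ n : ℕ, 0 ≤ P.eval (n : ℤ)) :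
    ∃ C : ℝ, 1 ≤ C ∧ ∀ T : ℕ, 1 ≤ T → ∀ n : ℕ,
      (P.eval (n : ℤ)).toNat ≤ T → (n : ℝ) < C * (T : ℝ) ^ ((P.natDegree : ℝ)⁻¹) := by
  obtain ⟨B, hB0, hB⟩ := poly_growth P hd hval
  set d := P.natDegree with hdd
  refine ⟨(B : ℝ) + 3, by nlinarith [Nat.cast_nonneg (α := ℝ) B], fun T hT n hn => ?_⟩
  have hTpow : (1 : ℝ) ≤ (T : ℝ) ^ ((d : ℝ)⁻¹) := by
    calc (1 : ℝ) = 1 ^ ((d : ℝ)⁻¹) := (Real.one_rpow _).symm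
      _ ≤ (T : ℝ) ^ ((d : ℝ)⁻¹) :=
        Real.rpow_le_rpow zero_le_one (by exact_mod_cast hT) (by positivity)
  have hTpow0 : (0 : ℝ) < (T : ℝ) ^ ((d : ℝ)⁻¹) := lt_of_lt_of_le one_pos hTpow
  rcases lt_or_ge n B with h | h
  · have : (n : ℝ) < B + 3 := by
      have := (Nat.cast_lt (α := ℝ)).mpr h; linarith
    calc (n : ℝ) < (B : ℝ) + 3 := this
      _ = ((B : ℝ) + 3) * 1 := (mul_one _).symm
      _ ≤ ((B : ℝ) + 3) * ((T : ℝ) ^ ((d : ℝ)⁻¹)) := by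
        apply mul_le_mul_of_nonneg_left hTpow (by positivity)
  · have h1 : (n : ℤ) ^ d ≤ 2 * P.eval (n : ℤ) := hB n h
    have h2 : P.eval (n : ℤ) ≤ (T : ℤ) := by
      have := Int.toNat_of_nonneg (hval n)
      omega
    have h2' : (n : ℤ) ^ d ≤ 2 * (T : ℤ) := by linarith
    have h3 : ((n : ℝ)) ^ d ≤ 2 * (T : ℝ) := by exact_mod_cast h2'
    have h4 : (n : ℝ) = (((n : ℝ)) ^ d) ^ ((d : ℝ)⁻¹) :=
      (Real.pow_rpow_inv_natCast (by positivity) (by omega)).symm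
    have h5 : (n : ℝ) ≤ (2 * (T : ℝ)) ^ ((d : ℝ)⁻¹) := by
      rw [h4]
      exact Real.rpow_le_rpow (by positivity) h3 (by positivity)
    have h6 : (2 * (T : ℝ)) ^ ((d : ℝ)⁻¹) ≤ 2 * (T : ℝ) ^ ((d : ℝ)⁻¹) := by
      rw [Real.mul_rpow (by norm_num) (by positivity)]
      apply mul_le_mul_of_nonneg_right _ (le_of_lt hTpow0)
      calc (2 : ℝ) ^ ((d : ℝ)⁻¹) ≤ 2 ^ (1 : ℝ) := by
            apply Real.rpow_le_rpow_of_exponent_le one_le_two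
            rw [inv_le_one_iff₀]; right; exact_mod_cast hd
        _ = 2 := Real.rpow_one 2
    have : 2 * (T : ℝ) ^ ((d : ℝ)⁻¹) < ((B : ℝ) + 3) * (T : ℝ) ^ ((d : ℝ)⁻¹) := by
      apply mul_lt_mul_of_pos_right _ hTpow0
      have : (0:ℝ) ≤ (B:ℝ) := by positivity
      linarith
    linarith

lemma tend_aux (c σ : ℝ) (hσ : σ < 1) :
    Filter.Tendsto (fun t : ℝ => c * t ^ σ - t) Filter.atTop Filter.atBot := by
  have h0 : Filter.Tendsto (fun t : ℝ => c * t ^ (σ - 1)) Filter.atTop (nhds 0) := by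
    have := (tendsto_rpow_neg_atTop (by linarith : 0 < 1 - σ)).const_mul c
    simpa [neg_sub] using this
  have hev : ∀ᶠ t in Filter.atTop, c * t ^ σ - t ≤ -(t / 2) := by
    filter_upwards [h0.eventually_lt_const (by norm_num : (0:ℝ) < 1/2),
      Filter.eventually_ge_atTop (1 : ℝ)] with t h1t ht1
    have ht0 : (0 : ℝ) < t := lt_of_lt_of_le one_pos ht1
    have hts : t ^ σ = t ^ (σ - 1) * t := by
      rw [← Real.rpow_add_one (ne_of_gt ht0)]; ring_nf
    rw [hts]
    nlinarith
  apply Filter.tendsto_atBot_mono' _ hev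
  have : Filter.Tendsto (fun t : ℝ => t / 2) Filter.atTop Filter.atTop :=
    Filter.Tendsto.atTop_div_const (by norm_num) Filter.tendsto_id
  exact Filter.tendsto_neg_atTop_atBot.comp this

/-- The finite sum set of `A`: all sums of nonempty finite subsets of `A`. -/
def FS (A : Set ℕ) : Set ℕ :=
  {n | ∃ F : Finset ℕ, ↑F ⊆ A ∧ F.Nonempty ∧ ∑ m ∈ F, m = n}

lemma FS_card (A : Set ℕ) (hA : ∀ x ∈ A, 1 ≤ x) (N : ℕ)
    (hfin : (A ∩ Set.Icc 1 N).Finite) :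
    (FS A ∩ Set.Icc 1 N).ncard ≤ 2 ^ (A ∩ Set.Icc 1 N).ncard := by
  classical
  set B := hfin.toFinset with hB
  have hsub : FS A ∩ Set.Icc 1 N ⊆ ↑(B.powerset.image fun F => ∑ m ∈ F, m) := by
    rintro x ⟨⟨F, hFA, hFne, rfl⟩, hx1, hxN⟩
    apply Finset.mem_coe.mpr
    apply Finset.mem_image.mpr
    refine ⟨F, Finset.mem_powerset.mpr fun m hm => ?_, rfl⟩
    rw [hB, Set.Finite.mem_toFinset]
    have hmA : m ∈ A := hFA hm
    refine ⟨hmA, hA m hmA, le_trans ?_ hxN⟩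
    exact Finset.single_le_sum (fun i _ => Nat.zero_le i) hm
  calc (FS A ∩ Set.Icc 1 N).ncard
      ≤ ((B.powerset.image fun F => ∑ m ∈ F, m) : Set ℕ).ncard :=
        Set.ncard_le_ncard hsub (Finset.finite_toSet _)
    _ = (B.powerset.image fun F => ∑ m ∈ F, m).card := Set.ncard_coe_finset _
    _ ≤ B.powerset.card := Finset.card_image_le
    _ = 2 ^ B.card := Finset.card_powerset _
    _ = 2 ^ (A ∩ Set.Icc 1 N).ncard := by rw [Set.ncard_eq_toFinset_card _ hfin]

/-- If `∑ 1/deg(P_i) < 1`, then `A = { ∏ a_i^{P_i(n_i)} }` has `FS(A)` of density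
zero; in particular `A` is not complete. -/
theorem stmt13 (s : ℕ) (a : Fin s → ℕ) (ha : ∀ i, 2 ≤ a i)
    (P : Fin s → Polynomial ℤ)
    (hdeg : ∀ i, 0 < (P i).natDegree)
    (hval : ∀ i, ∀ n : ℕ, 0 ≤ (P i).eval (n : ℤ))
    (h0 : ∀ i, (P i).eval 0 = 0)
    (hsum : ∑ i, (1 : ℝ) / ((P i).natDegree : ℝ) < 1) :
    Filter.Tendsto
      (fun N : ℕ =>
        ((FS {x : ℕ | ∃ n : Fin s → ℕ,
            x = ∏ i, (a i) ^ ((P i).eval ((n i : ℤ))).toNat} ∩ Set.Icc 1 N).ncard : ℝ) / N)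
      Filter.atTop (nhds 0) := by
  classical
  set A : Set ℕ := {x : ℕ | ∃ n : Fin s → ℕ,
      x = ∏ i, (a i) ^ ((P i).eval ((n i : ℤ))).toNat} with hAdef
  have hA1 : ∀ x ∈ A, 1 ≤ x := by
    rintro x ⟨n, rfl⟩
    exact Finset.prod_pos fun i _ => pow_pos (lt_of_lt_of_le (by norm_num) (ha i)) _
  choose C hC1 hC using fun i => poly_count (P i) (hdeg i) (hval i)
  set σ : ℝ := ∑ i, (1 : ℝ) / ((P i).natDegree : ℝ) with hσdef
  have hσ0 : 0 ≤ σ := Finset.sum_nonneg fun i _ => by positivity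
  set K : ℝ := ∏ i, (C i + 1) with hKdef
  have hK0 : 0 < K := Finset.prod_pos fun i _ => by linarith [hC1 i]
  have hfin : ∀ N : ℕ, (A ∩ Set.Icc 1 N).Finite :=
    fun N => Set.Finite.subset (Set.finite_Icc 1 N) Set.inter_subset_right
  -- counting A up to N
  have key : ∀ N : ℕ, 2 ≤ N →
      ((A ∩ Set.Icc 1 N).ncard : ℝ) ≤ K * ((Nat.log 2 N : ℝ)) ^ σ := by
    intro N hN
    set L := Nat.log 2 N with hLdef
    have hL1 : 1 ≤ L := Nat.log_pos one_lt_two hN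
    have hL1' : (1 : ℝ) ≤ (L : ℝ) := by exact_mod_cast hL1
    set m : Fin s → ℕ := fun i => ⌈C i * (L : ℝ) ^ (((P i).natDegree : ℝ))⁻¹⌉₊ with hmdef
    have hsub : A ∩ Set.Icc 1 N ⊆
        ↑((Fintype.piFinset fun i => Finset.range (m i)).image
          fun n : Fin s → ℕ => ∏ i, (a i) ^ ((P i).eval ((n i : ℤ))).toNat) := by
      rintro x ⟨⟨n, rfl⟩, hx1, hxN⟩
      apply Finset.mem_coe.mpr
      apply Finset.mem_image.mpr
      refine ⟨n, Fintype.mem_piFinset.mpr fun i => Finset.mem_range.mpr ?_, rfl⟩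
      have hdvd : (a i) ^ ((P i).eval ((n i : ℤ))).toNat ∣
          ∏ j, (a j) ^ ((P j).eval ((n j : ℤ))).toNat :=
        Finset.dvd_prod_of_mem _ (Finset.mem_univ i)
      have hle : (a i) ^ ((P i).eval ((n i : ℤ))).toNat ≤ N :=
        le_trans (Nat.le_of_dvd hx1 hdvd) hxN
      have h2 : 2 ^ ((P i).eval ((n i : ℤ))).toNat ≤ N :=
        le_trans (Nat.pow_le_pow_left (ha i) _) hle
      have heL : ((P i).eval ((n i : ℤ))).toNat ≤ L :=
        (Nat.le_log_iff_pow_le one_lt_two (by omega)).mpr h2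
      have hlt := hC i L hL1 (n i) heL
      exact_mod_cast lt_of_lt_of_le hlt (Nat.le_ceil _)
    have hcard1 : (A ∩ Set.Icc 1 N).ncard ≤ ∏ i, m i := by
      calc (A ∩ Set.Icc 1 N).ncard
          ≤ (((Fintype.piFinset fun i => Finset.range (m i)).image
            fun n : Fin s → ℕ => ∏ i, (a i) ^ ((P i).eval ((n i : ℤ))).toNat) : Set ℕ).ncard :=
            Set.ncard_le_ncard hsub (Finset.finite_toSet _)
        _ = ((Fintype.piFinset fun i => Finset.range (m i)).image
            fun n : Fin s → ℕ => ∏ i, (a i) ^ ((P i).eval ((n i : ℤ))).toNat).card :=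
            Set.ncard_coe_finset _
        _ ≤ (Fintype.piFinset fun i => Finset.range (m i)).card := Finset.card_image_le
        _ = ∏ i, m i := by simp
    have hmb : ∀ i, (m i : ℝ) ≤ (C i + 1) * (L : ℝ) ^ (((P i).natDegree : ℝ))⁻¹ := by
      intro i
      have hLpow : (1 : ℝ) ≤ (L : ℝ) ^ (((P i).natDegree : ℝ))⁻¹ := by
        calc (1 : ℝ) = 1 ^ (((P i).natDegree : ℝ))⁻¹ := (Real.one_rpow _).symm
          _ ≤ _ := Real.rpow_le_rpow zero_le_one hL1' (by positivity)
      have h1 : (m i : ℝ) < C i * (L : ℝ) ^ (((P i).natDegree : ℝ))⁻¹ + 1 :=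
        Nat.ceil_lt_add_one (by nlinarith [hC1 i, hLpow])
      nlinarith [hC1 i, hLpow]
    calc ((A ∩ Set.Icc 1 N).ncard : ℝ)
        ≤ ((∏ i, m i : ℕ) : ℝ) := by exact_mod_cast hcard1
      _ = ∏ i, (m i : ℝ) := by push_cast; ring
      _ ≤ ∏ i, ((C i + 1) * (L : ℝ) ^ (((P i).natDegree : ℝ))⁻¹) :=
          Finset.prod_le_prod (fun i _ => Nat.cast_nonneg _) (fun i _ => hmb i)
      _ = K * (L : ℝ) ^ σ := by
          rw [Finset.prod_mul_distrib, hKdef, hσdef,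
            Real.rpow_sum_of_pos (by linarith : (0 : ℝ) < (L : ℝ))]
          simp [one_div]
  -- bounding FS
  have hbound : ∀ N : ℕ, 2 ≤ N → ((FS A ∩ Set.Icc 1 N).ncard : ℝ) ≤
      (2 : ℝ) ^ (K * (Real.logb 2 N) ^ σ) := by
    intro N hN
    calc ((FS A ∩ Set.Icc 1 N).ncard : ℝ)
        ≤ (2 : ℝ) ^ (((A ∩ Set.Icc 1 N).ncard : ℕ) : ℝ) := by
          rw [Real.rpow_natCast]
          exact_mod_cast FS_card A hA1 N (hfin N)
      _ ≤ (2 : ℝ) ^ (K * ((Nat.log 2 N : ℝ)) ^ σ) :=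
          Real.rpow_le_rpow_of_exponent_le one_le_two (key N hN)
      _ ≤ (2 : ℝ) ^ (K * (Real.logb 2 N) ^ σ) := by
          apply Real.rpow_le_rpow_of_exponent_le one_le_two
          apply mul_le_mul_of_nonneg_left _ (le_of_lt hK0)
          exact Real.rpow_le_rpow (Nat.cast_nonneg _) (Real.natLog_le_logb N 2) hσ0
  -- the majorant tends to 0
  have hg : Tendsto (fun N : ℕ => (2 : ℝ) ^ (K * (Real.logb 2 N) ^ σ) / N)
      atTop (nhds 0) := by
    set c : ℝ := K * Real.log 2 / (Real.log 2) ^ σ with hcdef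
    have h1 : Tendsto (fun t : ℝ => c * t ^ σ - t) atTop atBot := tend_aux c σ hsum
    have h2 : Tendsto (fun N : ℕ => Real.log N) atTop atTop :=
      Real.tendsto_log_atTop.comp tendsto_natCast_atTop_atTop
    have h3 := h1.comp h2
    have h4 : Tendsto (fun N : ℕ =>
        Real.exp (c * (Real.log N) ^ σ - Real.log N)) atTop (nhds 0) :=
      Real.tendsto_exp_atBot.comp h3
    apply h4.congr'
    filter_upwards [Filter.eventually_ge_atTop 1] with N hN1
    have hNpos : (0 : ℝ) < (N : ℝ) := by exact_mod_cast hN1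
    have hN1' : (1 : ℝ) ≤ (N : ℝ) := by exact_mod_cast hN1
    have hlogN0 : 0 ≤ Real.log N := Real.log_nonneg hN1'
    have hlog2 : (0 : ℝ) < Real.log 2 := Real.log_pos one_lt_two
    have hlog2σ : (0 : ℝ) < (Real.log 2) ^ σ := Real.rpow_pos_of_pos hlog2 σ
    have e2 : (Real.logb 2 (N : ℝ)) ^ σ = (Real.log N) ^ σ / (Real.log 2) ^ σ := by
      rw [Real.logb, Real.div_rpow hlogN0 (le_of_lt hlog2)]
    have e3 : Real.log 2 * (K * (Real.logb 2 (N : ℝ)) ^ σ) = c * (Real.log N) ^ σ := by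
      rw [e2, hcdef]; field_simp
    rw [Real.exp_sub, Real.exp_log hNpos, Real.rpow_def_of_pos (by norm_num : (0:ℝ) < 2)]
    rw [e3]
  -- squeeze
  apply tendsto_of_tendsto_of_tendsto_of_le_of_le' tendsto_const_nhds hg
  · filter_upwards with N
    positivity
  · filter_upwards [Filter.eventually_ge_atTop 2] with N hN
    have h1 := hbound N hN
    have hNpos : (0 : ℝ) < (N : ℝ) := by
      have : 0 < N := by omega
      exact_mod_cast this
    gcongr
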